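/- If AG(w, l) holds (w's tally always strictly exceeds l's tally while both are eligible), then in any continuation of the STV count, l cannot be seated unless w is also seated. -/
import Mathlib


/-- Status of a candidate at a round of the STV count. -/
inductive STVStatus : Type
  | eligible : STVStatus
  | seated : STVStatus
  | eliminated : STVStatus
  deriving DecidableEq

open STVStatus

/-- If `AG(w,l)` holds (`w`'s tally always strictly exceeds `l`'s while
both are eligible), then in any continuation of the STV count `l` cannot be seated
unless `w` is also seated.  The count dynamics: every candidate starts eligible; seated
and eliminated statuses persist; a candidate is eliminated only if it has the strictly
smallest tally among eligible candidates; and a candidate is seated from eligibility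
either because its tally reached the quota `Q` — in which case every eligible candidate
with tally at least `Q` is seated in that round — or in the final round, in which every
eligible candidate is seated. -/
theorem AG_implies_not_seated_without {C : Type*}
    (w l : C) (hwl : w ≠ l) (Q : ℚ)
    (status : ℕ → C → STVStatus) (tally : ℕ → C → ℚ)
    (hstart : ∀ c, status 0 c = eligible)
    (hseat_persist : ∀ r c, status r c = seated → status (r+1) c = seated)
    (helim_persist : ∀ r c, status r c = eliminated → status (r+1) c = eliminated)
    (helim_rule : ∀ r c, status r c = eligible → status (r+1) c = eliminated →
      ∀ c', status r c' = eligible → c' ≠ c → tally r c < tally r c')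
    (hseat_rule : ∀ r c, status r c = eligible → status (r+1) c = seated →
      ((Q ≤ tally r c ∧
        ∀ c', status r c' = eligible → Q ≤ tally r c' → status (r+1) c' = seated) ∨
       (∀ c', status r c' = eligible → status (r+1) c' = seated)))
    (hAG : ∀ r, status r w = eligible → status r l = eligible → tally r l < tally r w) :
    ∀ r, status r l = seated → status r w = seated := by
  have key : ∀ r, (status r l = seated → status r w = seated) ∧
      (status r w = eliminated → status r l = eliminated) := by
    intro r
    induction r with
    | zero =>
      constructor
      · intro h; rw [hstart l] at h; exact absurd h (by simp)
      · intro h; rw [hstart w] at h; exact absurd h (by simp)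
    | succ r ih =>
      obtain ⟨ih1, ih2⟩ := ih
      constructor
      · intro hl
        cases hsl : status r l with
        | seated => exact hseat_persist r w (ih1 hsl)
        | eliminated =>
          exact absurd (helim_persist r l hsl) (by rw [hl]; simp)
        | eligible =>
          cases hsw : status r w with
          | seated => exact hseat_persist r w hsw
          | eliminated =>
            exact absurd (ih2 hsw) (by rw [hsl]; simp)
          | eligible =>
            rcases hseat_rule r l hsl hl with ⟨hQ, hall⟩ | hall
            · exact hall w hsw (hQ.trans (hAG r hsw hsl).le)
            · exact hall w hsw
      · intro hw
        cases hsw : status r w with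
        | seated =>
          exact absurd (hseat_persist r w hsw) (by rw [hw]; simp)
        | eliminated =>
          exact helim_persist r l (ih2 hsw)
        | eligible =>
          cases hsl : status r l with
          | seated => exact absurd (ih1 hsl) (by rw [hsw]; simp)
          | eliminated => exact helim_persist r l hsl
          | eligible =>
            have h1 := helim_rule r w hsw hw l hsl hwl.symm
            have h2 := hAG r hsw hsl
            exact absurd (h1.trans h2) (lt_irrefl _)
  exact fun r => (key r).1
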